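/- If \Delta_e denotes the edge subdivision of a simplicial complex \Delta on an edge e \in \Delta, then h(\Delta_e, x) = h(\Delta, x) + x \cdot h(link_\Delta(e), x). Consequently, if h(\Delta, x) and h(link_\Delta(e), x) are both gamma-positive (with appropriate centers of symmetry n/2 and (n-2)/2 respectively, where n-1 = dim \Delta), then h(\Delta_e, x) is gamma-positive. -/

import Mathlib

open Polynomial Finset

/-- The number of faces with `i` vertices (i.e. of dimension `i-1`). -/
def faceCount {V : Type*} [DecidableEq V] (Δ : Finset (Finset V)) (i : ℕ) : ℕ :=
  (Δ.filter fun F => F.card = i).card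

/-- The `h`-polynomial of an `(n-1)`-dimensional simplicial complex. -/
noncomputable def hPoly {V : Type*} [DecidableEq V] (n : ℕ) (Δ : Finset (Finset V)) :
    Polynomial ℝ :=
  ∑ i ∈ Finset.range (n + 1),
    Polynomial.C ((faceCount Δ i : ℝ)) * Polynomial.X ^ i * (1 - Polynomial.X) ^ (n - i)

/-- The link of a face `e` in `Δ`: faces disjoint from `e` whose union with `e` is a
face. -/
def linkC {N : ℕ} (Δ : Finset (Finset (Fin N))) (e : Finset (Fin N)) :
    Finset (Finset (Fin N)) :=
  Finset.univ.filter fun L => L ∩ e = ∅ ∧ L ∪ e ∈ Δ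

/-- Restriction of a set of vertices of `Fin (N+1)` to the old vertices `Fin N`
(the new vertex of the subdivision being `Fin.last N`). -/
def oldPart {N : ℕ} (G : Finset (Fin (N + 1))) : Finset (Fin N) :=
  Finset.univ.filter fun i : Fin N => i.castSucc ∈ G

/-- The edge subdivision (stellar subdivision on the edge `e`) of `Δ`, with new
vertex `Fin.last N`: its faces are the faces of `Δ` not containing `e`, together
with the sets `{u} ∪ A ∪ L` with `A ⊊ e` and `L` in the link of `e`. -/
def edgeSub {N : ℕ} (Δ : Finset (Finset (Fin N))) (e : Finset (Fin N)) :
    Finset (Finset (Fin (N + 1))) :=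
  Finset.univ.filter fun G : Finset (Fin (N + 1)) =>
    (Fin.last N ∉ G ∧ oldPart G ∈ Δ ∧ ¬ e ⊆ oldPart G) ∨
    (Fin.last N ∈ G ∧ ¬ e ⊆ oldPart G ∧ oldPart G ∪ e ∈ Δ)


def castEmb (N : ℕ) : Fin N ↪ Fin (N+1) := ⟨Fin.castSucc, Fin.castSucc_injective N⟩

lemma mem_oldPart {N : ℕ} {G : Finset (Fin (N+1))} {i : Fin N} :
    i ∈ oldPart G ↔ i.castSucc ∈ G := by simp [oldPart]

lemma oldPart_map {N : ℕ} (F : Finset (Fin N)) : oldPart (F.map (castEmb N)) = F := by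
  ext i; simp [mem_oldPart, castEmb, Fin.castSucc_injective N |>.eq_iff]

lemma map_oldPart {N : ℕ} {G : Finset (Fin (N+1))} (h : Fin.last N ∉ G) :
    (oldPart G).map (castEmb N) = G := by
  ext a
  simp only [mem_map, mem_oldPart, castEmb, Function.Embedding.coeFn_mk]
  constructor
  · rintro ⟨i, hi, rfl⟩; exact hi
  · intro ha
    have hne : a ≠ Fin.last N := fun hh => h (hh ▸ ha)
    obtain ⟨i, rfl⟩ := Fin.exists_castSucc_eq.2 hne
    exact ⟨i, ha, rfl⟩

def insertLast {N : ℕ} (H : Finset (Fin N)) : Finset (Fin (N+1)) :=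
  insert (Fin.last N) (H.map (castEmb N))

lemma oldPart_insertLast {N : ℕ} (H : Finset (Fin N)) : oldPart (insertLast H) = H := by
  ext i
  simp [mem_oldPart, insertLast, castEmb, (Fin.castSucc_lt_last i).ne,
    Fin.castSucc_injective N |>.eq_iff]

lemma insertLast_oldPart {N : ℕ} {G : Finset (Fin (N+1))} (h : Fin.last N ∈ G) :
    insertLast (oldPart G) = G := by
  ext a
  simp only [insertLast, mem_insert, mem_map, mem_oldPart, castEmb, Function.Embedding.coeFn_mk]
  constructor
  · rintro (rfl | ⟨i, hi, rfl⟩); exact h; exact hi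
  · intro ha
    rcases eq_or_ne a (Fin.last N) with rfl | hne
    · exact Or.inl rfl
    · obtain ⟨i, rfl⟩ := Fin.exists_castSucc_eq.2 hne
      exact Or.inr ⟨i, ha, rfl⟩

lemma card_insertLast {N : ℕ} (H : Finset (Fin N)) : (insertLast H).card = H.card + 1 := by
  rw [insertLast, card_insert_of_notMem, card_map]
  simp [castEmb, (Fin.castSucc_lt_last _).ne]

lemma insertLast_injective {N : ℕ} : Function.Injective (insertLast (N := N)) :=
  Function.LeftInverse.injective oldPart_insertLast

section
variable {N : ℕ} {Δ : Finset (Finset (Fin N))} {e : Finset (Fin N)}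

lemma link_injOn {L L' : Finset (Fin N)} (h : L ∩ e = ∅) (h' : L' ∩ e = ∅)
    (heq : L ∪ e = L' ∪ e) : L = L' := by
  have hd : Disjoint L e := disjoint_iff_inter_eq_empty.2 h
  have hd' : Disjoint L' e := disjoint_iff_inter_eq_empty.2 h'
  have : (L ∪ e) \ e = (L' ∪ e) \ e := by rw [heq]
  simpa [union_sdiff_right, Finset.sdiff_eq_self_iff_disjoint.2 hd,
    Finset.sdiff_eq_self_iff_disjoint.2 hd'] using this

lemma card_containing (hcard : e.card = 2) (i : ℕ) :
    (Δ.filter fun F => F.card = i + 2 ∧ e ⊆ F).card = faceCount (linkC Δ e) i := by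
  have hset : (Δ.filter fun F => F.card = i + 2 ∧ e ⊆ F)
      = (((linkC Δ e).filter fun L => L.card = i).image (· ∪ e)) := by
    ext F
    simp only [mem_filter, mem_image, linkC, mem_univ, true_and]
    constructor
    · rintro ⟨hF, hc, he'⟩
      have hdis : (F \ e) ∩ e = ∅ := by
        rw [← disjoint_iff_inter_eq_empty]; exact sdiff_disjoint
      have hun : F \ e ∪ e = F := by
        rw [sdiff_union_self_eq_union, union_eq_left.2 he']
      exact ⟨F \ e, ⟨⟨hdis, by rwa [hun]⟩, by rw [card_sdiff_of_subset he', hc, hcard]; rfl⟩, hun⟩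
    · rintro ⟨L, ⟨⟨hle, hmem⟩, hc⟩, rfl⟩
      have hd : Disjoint L e := disjoint_iff_inter_eq_empty.2 hle
      exact ⟨hmem, by rw [card_union_of_disjoint hd, hc, hcard], subset_union_right⟩
  rw [hset, faceCount]
  apply card_image_of_injOn
  intro L hL L' hL' heq
  simp only [coe_filter, linkC, mem_univ, Set.mem_setOf_eq, mem_filter, true_and] at hL hL'
  exact link_injOn hL.1.1 hL'.1.1 heq

/-- the set of "old parts" of new faces containing the new vertex -/
def Sset (Δ : Finset (Finset (Fin N))) (e : Finset (Fin N)) (k : ℕ) : Finset (Finset (Fin N)) :=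
  Finset.univ.filter fun H => ¬ e ⊆ H ∧ H ∪ e ∈ Δ ∧ H.card = k

lemma S_zero (he : e ∈ Δ) (hcard : e.card = 2) :
    (Sset Δ e 0).card = faceCount (linkC Δ e) 0 := by
  have h1 : Sset Δ e 0 = {∅} := by
    ext H
    simp only [Sset, mem_filter, mem_univ, true_and, mem_singleton, card_eq_zero]
    constructor
    · rintro ⟨-, -, rfl⟩; rfl
    · rintro rfl
      refine ⟨fun hh => ?_, by simpa using he, rfl⟩
      rw [subset_empty] at hh; rw [hh] at hcard; simp at hcard
  have h2 : (linkC Δ e).filter (fun L => L.card = 0) = {∅} := by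
    ext L
    simp only [linkC, filter_filter, mem_filter, mem_univ, true_and, mem_singleton, card_eq_zero]
    constructor
    · rintro ⟨-, rfl⟩; rfl
    · rintro rfl; simpa using he
  rw [faceCount, h1, h2]

lemma part_card (v w : Fin N) (hv : e = {v, w}) (hvw : v ≠ w) (k : ℕ) :
    (Finset.univ.filter fun H =>
        (¬ e ⊆ H ∧ H ∪ e ∈ Δ ∧ H.card = k + 1) ∧ v ∈ H ∧ w ∉ H).card
      = faceCount (linkC Δ e) k := by
  have hset : (Finset.univ.filter fun H =>
        (¬ e ⊆ H ∧ H ∪ e ∈ Δ ∧ H.card = k + 1) ∧ v ∈ H ∧ w ∉ H)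
      = ((linkC Δ e).filter fun L => L.card = k).image (insert v) := by
    ext H
    simp only [mem_filter, mem_univ, true_and, mem_image, linkC]
    constructor
    · rintro ⟨⟨hns, hmem, hc⟩, hvH, hwH⟩
      have hvLne : v ∉ H.erase v := notMem_erase _ _
      have hinter : (H.erase v) ∩ e = ∅ := by
        ext x
        simp only [mem_inter, mem_erase, hv, mem_insert, mem_singleton, notMem_empty,
          iff_false, not_and]
        rintro ⟨hxv, hxH⟩ (rfl | rfl)
        · exact hxv rfl
        · exact hwH hxH
      have hun : H.erase v ∪ e = H ∪ e := by
        ext x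
        simp only [mem_union, mem_erase, hv, mem_insert, mem_singleton]
        constructor
        · rintro (⟨-, h⟩ | h); exact Or.inl h; exact Or.inr h
        · rintro (h | h)
          · rcases eq_or_ne x v with rfl | hxv
            · exact Or.inr (Or.inl rfl)
            · exact Or.inl ⟨hxv, h⟩
          · exact Or.inr h
      refine ⟨H.erase v, ⟨⟨hinter, by rwa [hun]⟩, ?_⟩, ?_⟩
      · rw [card_erase_of_mem hvH, hc]; rfl
      · exact insert_erase hvH
    · rintro ⟨L, ⟨⟨hle, hmem⟩, hc⟩, rfl⟩
      have hvL : v ∉ L := by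
        intro h
        have : v ∈ L ∩ e := mem_inter.2 ⟨h, by simp [hv]⟩
        simp [hle] at this
      have hwL : w ∉ L := by
        intro h
        have : w ∈ L ∩ e := mem_inter.2 ⟨h, by simp [hv]⟩
        simp [hle] at this
      have hun : insert v L ∪ e = L ∪ e := by
        ext x
        simp only [mem_union, mem_insert, hv, mem_singleton]
        tauto
      refine ⟨⟨?_, by rwa [hun], by rw [card_insert_of_notMem hvL, hc]⟩,
        mem_insert_self _ _, ?_⟩
      · intro hsub
        have : w ∈ insert v L := hsub (by simp [hv])
        simp only [mem_insert] at this
        rcases this with rfl | h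
        · exact hvw rfl
        · exact hwL h
      · simp only [mem_insert]
        rintro (rfl | h)
        · exact hvw rfl
        · exact hwL h
  rw [hset, faceCount]
  apply card_image_of_injOn
  intro L hL L' hL' heq
  simp only [coe_filter, linkC, mem_univ, Set.mem_setOf_eq, true_and, mem_filter] at hL hL'
  have hvL : v ∉ L := by
    intro h
    have : v ∈ L ∩ e := mem_inter.2 ⟨h, by simp [hv]⟩
    simp [hL.1.1] at this
  have hvL' : v ∉ L' := by
    intro h
    have : v ∈ L' ∩ e := mem_inter.2 ⟨h, by simp [hv]⟩
    simp [hL'.1.1] at this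
  rw [← erase_insert hvL, ← erase_insert hvL', heq]

lemma S_succ (hcard : e.card = 2) (k : ℕ) :
    (Sset Δ e (k+1)).card
      = faceCount (linkC Δ e) (k+1) + 2 * faceCount (linkC Δ e) k := by
  obtain ⟨a, b, hab, rfl⟩ := Finset.card_eq_two.1 hcard
  set e : Finset (Fin N) := {a, b} with he'
  -- split by a ∈ H then b ∈ H
  have split1 := card_filter_add_card_filter_not (s := Sset Δ e (k+1))
    (fun H => a ∈ H)
  have split2 := card_filter_add_card_filter_not
    (s := (Sset Δ e (k+1)).filter (fun H => a ∉ H)) (fun H => b ∈ H)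
  -- part with a ∈ H : then b ∉ H automatically
  have hTa : (Sset Δ e (k+1)).filter (fun H => a ∈ H)
      = Finset.univ.filter fun H =>
        (¬ e ⊆ H ∧ H ∪ e ∈ Δ ∧ H.card = k + 1) ∧ a ∈ H ∧ b ∉ H := by
    ext H
    simp only [Sset, filter_filter, mem_filter, mem_univ, true_and]
    constructor
    · rintro ⟨⟨hns, hmem, hc⟩, haH⟩
      refine ⟨⟨hns, hmem, hc⟩, haH, fun hbH => hns ?_⟩
      rw [he']; exact insert_subset haH (by simpa using hbH)
    · rintro ⟨h, haH, -⟩; exact ⟨h, haH⟩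
  have hTb : ((Sset Δ e (k+1)).filter (fun H => a ∉ H)).filter (fun H => b ∈ H)
      = Finset.univ.filter fun H =>
        (¬ e ⊆ H ∧ H ∪ e ∈ Δ ∧ H.card = k + 1) ∧ b ∈ H ∧ a ∉ H := by
    ext H
    simp only [Sset, filter_filter, mem_filter, mem_univ, true_and]
    tauto
  have hT0 : ((Sset Δ e (k+1)).filter (fun H => a ∉ H)).filter (fun H => b ∉ H)
      = (linkC Δ e).filter fun L => L.card = k + 1 := by
    ext H
    simp only [Sset, linkC, filter_filter, mem_filter, mem_univ, true_and]
    constructor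
    · rintro ⟨⟨⟨hns, hmem, hc⟩, haH⟩, hbH⟩
      have : H ∩ e = ∅ := by
        ext x
        simp only [mem_inter, he', mem_insert, mem_singleton, notMem_empty, iff_false, not_and]
        rintro hxH (rfl | rfl); exact haH hxH; exact hbH hxH
      exact ⟨⟨this, hmem⟩, hc⟩
    · rintro ⟨⟨hint, hmem⟩, hc⟩
      have haH : a ∉ H := by
        intro h
        have : a ∈ H ∩ e := mem_inter.2 ⟨h, by simp [he']⟩
        simp [hint] at this
      have hbH : b ∉ H := by
        intro h
        have : b ∈ H ∩ e := mem_inter.2 ⟨h, by simp [he']⟩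
        simp [hint] at this
      refine ⟨⟨⟨fun hsub => haH (hsub (by simp [he'])), hmem, hc⟩, haH⟩, hbH⟩
  have ca : ((Sset Δ e (k+1)).filter (fun H => a ∈ H)).card = faceCount (linkC Δ e) k := by
    rw [hTa]; exact part_card a b he' hab k
  have cb : (((Sset Δ e (k+1)).filter (fun H => a ∉ H)).filter (fun H => b ∈ H)).card
      = faceCount (linkC Δ e) k := by
    rw [hTb]; exact part_card b a (by rw [he', pair_comm]) hab.symm k
  have c0 : (((Sset Δ e (k+1)).filter (fun H => a ∉ H)).filter (fun H => b ∉ H)).card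
      = faceCount (linkC Δ e) (k+1) := by
    rw [hT0, faceCount]
  omega
end

section
variable {N : ℕ} {Δ : Finset (Finset (Fin N))} {e : Finset (Fin N)}

lemma card_Apart (i : ℕ) :
    (Finset.univ.filter fun G : Finset (Fin (N+1)) =>
        (Fin.last N ∉ G ∧ oldPart G ∈ Δ ∧ ¬ e ⊆ oldPart G) ∧ G.card = i).card
      = (Δ.filter fun F => F.card = i ∧ ¬ e ⊆ F).card := by
  have hset : (Finset.univ.filter fun G : Finset (Fin (N+1)) =>
        (Fin.last N ∉ G ∧ oldPart G ∈ Δ ∧ ¬ e ⊆ oldPart G) ∧ G.card = i)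
      = (Δ.filter fun F => F.card = i ∧ ¬ e ⊆ F).image (fun F => F.map (castEmb N)) := by
    ext G
    simp only [mem_filter, mem_univ, true_and, mem_image]
    constructor
    · rintro ⟨⟨hlast, hmem, hns⟩, hc⟩
      exact ⟨oldPart G, ⟨hmem, by rw [← map_oldPart hlast, card_map] at hc; exact ⟨hc, hns⟩⟩,
        map_oldPart hlast⟩
    · rintro ⟨F, ⟨hF, hc, hns⟩, rfl⟩
      refine ⟨⟨?_, by rwa [oldPart_map], by rwa [oldPart_map]⟩, by rwa [card_map]⟩
      simp [castEmb, (Fin.castSucc_lt_last _).ne]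
  rw [hset]
  exact card_image_of_injective _ (Finset.map_injective _)

lemma card_Bpart (k : ℕ) :
    (Finset.univ.filter fun G : Finset (Fin (N+1)) =>
        (Fin.last N ∈ G ∧ ¬ e ⊆ oldPart G ∧ oldPart G ∪ e ∈ Δ) ∧ G.card = k + 1).card
      = (Sset Δ e k).card := by
  have hset : (Finset.univ.filter fun G : Finset (Fin (N+1)) =>
        (Fin.last N ∈ G ∧ ¬ e ⊆ oldPart G ∧ oldPart G ∪ e ∈ Δ) ∧ G.card = k + 1)
      = (Sset Δ e k).image insertLast := by
    ext G
    simp only [mem_filter, mem_univ, true_and, mem_image, Sset]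
    constructor
    · rintro ⟨⟨hlast, hns, hmem⟩, hc⟩
      have hG := insertLast_oldPart hlast
      have : (oldPart G).card = k := by
        have := card_insertLast (oldPart G); rw [hG] at this; omega
      exact ⟨oldPart G, ⟨hns, hmem, this⟩, hG⟩
    · rintro ⟨H, ⟨hns, hmem, hc⟩, rfl⟩
      rw [oldPart_insertLast]
      exact ⟨⟨mem_insert_self _ _, hns, hmem⟩, by rw [card_insertLast, hc]⟩
  rw [hset]
  exact card_image_of_injective _ insertLast_injective

lemma faceCount_edgeSub_split (i : ℕ) :
    faceCount (edgeSub Δ e) i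
      = (Finset.univ.filter fun G : Finset (Fin (N+1)) =>
          (Fin.last N ∉ G ∧ oldPart G ∈ Δ ∧ ¬ e ⊆ oldPart G) ∧ G.card = i).card
      + (Finset.univ.filter fun G : Finset (Fin (N+1)) =>
          (Fin.last N ∈ G ∧ ¬ e ⊆ oldPart G ∧ oldPart G ∪ e ∈ Δ) ∧ G.card = i).card := by
  rw [faceCount, edgeSub, filter_filter]
  rw [← card_filter_add_card_filter_not (p := fun G => Fin.last N ∈ G)]
  rw [filter_filter, filter_filter]
  rw [add_comm]
  congr 1
  · congr 1; apply filter_congr; intro G _; constructor <;> intro h <;> tauto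
  · congr 1; apply filter_congr; intro G _; constructor <;> intro h <;> tauto
end

section
variable {N : ℕ} {Δ : Finset (Finset (Fin N))} {e : Finset (Fin N)}

lemma fc_zero (he : e ∈ Δ) (hcard : e.card = 2) :
    faceCount (edgeSub Δ e) 0 = faceCount Δ 0 := by
  rw [faceCount_edgeSub_split, card_Apart]
  have hB : (Finset.univ.filter fun G : Finset (Fin (N+1)) =>
      (Fin.last N ∈ G ∧ ¬ e ⊆ oldPart G ∧ oldPart G ∪ e ∈ Δ) ∧ G.card = 0) = ∅ := by
    apply filter_false_of_mem
    rintro G - ⟨⟨hlast, -⟩, hc⟩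
    rw [card_eq_zero] at hc
    subst hc; simp at hlast
  have hA : (Δ.filter fun F => F.card = 0 ∧ ¬ e ⊆ F) = Δ.filter fun F => F.card = 0 := by
    apply filter_congr
    intro F _
    constructor
    · exact fun h => h.1
    · intro h
      refine ⟨h, fun hsub => ?_⟩
      rw [card_eq_zero] at h; subst h
      rw [subset_empty] at hsub; rw [hsub] at hcard; simp at hcard
  rw [hB, hA, card_empty, faceCount]
  omega

lemma fc_one (he : e ∈ Δ) (hcard : e.card = 2) :
    faceCount (edgeSub Δ e) 1 = faceCount Δ 1 + faceCount (linkC Δ e) 0 := by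
  rw [faceCount_edgeSub_split, card_Apart, card_Bpart, S_zero he hcard]
  have hA : (Δ.filter fun F => F.card = 1 ∧ ¬ e ⊆ F) = Δ.filter fun F => F.card = 1 := by
    apply filter_congr
    intro F _
    constructor
    · exact fun h => h.1
    · intro h
      refine ⟨h, fun hsub => ?_⟩
      have := card_le_card hsub
      omega
  rw [hA]; rfl

lemma fc_two (hcard : e.card = 2) (i : ℕ) :
    faceCount (edgeSub Δ e) (i + 2) + faceCount (linkC Δ e) i
      = faceCount Δ (i + 2) + faceCount (linkC Δ e) (i + 1)
        + 2 * faceCount (linkC Δ e) i := by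
  rw [faceCount_edgeSub_split, card_Apart, card_Bpart, S_succ hcard]
  have hsplit := card_filter_add_card_filter_not
    (s := Δ.filter fun F => F.card = i + 2) (fun F => e ⊆ F)
  rw [filter_filter, filter_filter] at hsplit
  have h1 : (Δ.filter fun F => F.card = i + 2 ∧ e ⊆ F).card = faceCount (linkC Δ e) i :=
    card_containing hcard i
  have h2 : faceCount Δ (i+2) = (Δ.filter fun F => F.card = i + 2).card := rfl
  omega

lemma link_top_zero (hcard : e.card = 2) {m : ℕ}
    (hd : ∀ F ∈ Δ, F.card ≤ m + 2) :
    faceCount (linkC Δ e) (m + 1) = 0 := by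
  rw [faceCount, card_eq_zero]
  apply filter_false_of_mem
  intro L hL hc
  simp only [linkC, mem_filter, mem_univ, true_and] at hL
  have hd2 : Disjoint L e := disjoint_iff_inter_eq_empty.2 hL.1
  have := hd _ hL.2
  rw [card_union_of_disjoint hd2, hc, hcard] at this
  omega
end


lemma key_poly (m : ℕ) (f g l : ℕ → ℝ) (h0 : g 0 = f 0) (h1 : g 1 = f 1 + l 0)
    (h2 : ∀ i, g (i+2) = f (i+2) + l (i+1) + l i) (hl : l (m+1) = 0) :
    ∑ i ∈ Finset.range (m+3), C (g i) * X^i * (1-X)^(m+2-i)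
      = ∑ i ∈ Finset.range (m+3), C (f i) * X^i * (1-X)^(m+2-i)
        + X * ∑ j ∈ Finset.range (m+1), C (l j) * X^j * (1-X)^(m-j) := by
  have peel : ∀ h : ℕ → ℝ,
      ∑ i ∈ Finset.range (m+3), C (h i) * X^i * (1-X)^(m+2-i)
        = (∑ i ∈ Finset.range (m+1), C (h (i+2)) * X^(i+2) * (1-X)^(m-i))
          + C (h 1) * X * (1-X)^(m+1) + C (h 0) * (1-X)^(m+2) := by
    intro h
    rw [show m+3 = (m+2)+1 from rfl, Finset.sum_range_succ']
    rw [show m+2 = (m+1)+1 from rfl, Finset.sum_range_succ']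
    simp only [Nat.add_sub_add_right, pow_zero, pow_one, Nat.sub_zero, mul_one]
    norm_num
  have hg : ∑ i ∈ Finset.range (m+1), C (g (i+2)) * X^(i+2)*(1-X)^(m-i)
      = (∑ i ∈ Finset.range (m+1), C (f (i+2)) * X^(i+2)*(1-X)^(m-i))
        + (∑ i ∈ Finset.range (m+1), C (l (i+1)) * X^(i+2)*(1-X)^(m-i))
        + (∑ i ∈ Finset.range (m+1), C (l i) * X^(i+2)*(1-X)^(m-i)) := by
    rw [← Finset.sum_add_distrib, ← Finset.sum_add_distrib]
    apply Finset.sum_congr rfl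
    intro i _
    rw [h2 i, C_add, C_add]; ring
  have shift : (∑ i ∈ Finset.range (m+1), C (l (i+1)) * X^(i+2)*(1-X)^(m-i))
        + C (l 0) * X * (1-X)^(m+1)
      = ∑ j ∈ Finset.range (m+1), C (l j) * X^(j+1)*(1-X)^(m+1-j) := by
    have e1 := Finset.sum_range_succ' (fun j => C (l j) * X^(j+1) * (1-X)^(m+1-j)) (m+1)
    have e2 := Finset.sum_range_succ (fun j => C (l j) * X^(j+1) * (1-X)^(m+1-j)) (m+1)
    simp only [Nat.add_sub_add_right, hl, map_zero, zero_mul, add_zero, Nat.sub_zero,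
      pow_one, Nat.sub_self, pow_zero, mul_one] at e1 e2
    rw [← e2, e1]; norm_num
  have merge : (∑ j ∈ Finset.range (m+1), C (l j) * X^(j+1)*(1-X)^(m+1-j))
        + ∑ i ∈ Finset.range (m+1), C (l i) * X^(i+2)*(1-X)^(m-i)
      = X * ∑ j ∈ Finset.range (m+1), C (l j) * X^j * (1-X)^(m-j) := by
    rw [Finset.mul_sum, ← Finset.sum_add_distrib]
    apply Finset.sum_congr rfl
    intro j hj
    have hj' : j ≤ m := by simpa [Nat.lt_succ_iff] using hj
    have hmj : m + 1 - j = (m - j) + 1 := by omega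
    rw [hmj, pow_succ]
    ring
  rw [peel g, peel f, hg, h0, h1, C_add]
  linear_combination shift + merge

lemma gamma_part (n : ℕ) (hn : 2 ≤ n) (γ δ : ℕ → ℝ) :
    (∑ i ∈ Finset.range (n/2+1), C (γ i) * X^i * (1+X)^(n-2*i))
      + X * ∑ i ∈ Finset.range ((n-2)/2+1), C (δ i) * X^i * (1+X)^(n-2-2*i)
    = ∑ i ∈ Finset.range (n/2+1),
        C (γ i + if i = 0 then 0 else δ (i-1)) * X^i * (1+X)^(n-2*i) := by
  have hhalf : n/2 + 1 = ((n-2)/2 + 1) + 1 := by omega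
  have split : ∑ i ∈ Finset.range (n/2+1),
        C (γ i + if i = 0 then 0 else δ (i-1)) * X^i * (1+X)^(n-2*i)
      = (∑ i ∈ Finset.range (n/2+1), C (γ i) * X^i * (1+X)^(n-2*i))
        + ∑ i ∈ Finset.range (n/2+1),
            C (if i = 0 then 0 else δ (i-1)) * X^i * (1+X)^(n-2*i) := by
    rw [← Finset.sum_add_distrib]
    apply Finset.sum_congr rfl
    intro i _
    rw [C_add]; ring
  rw [split]
  congr 1
  symm
  rw [hhalf, Finset.sum_range_succ']
  simp only [if_true, eq_self_iff_true, if_pos rfl, mul_one, map_zero, zero_mul, add_zero, Nat.add_sub_cancel, pow_zero,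
    if_neg (Nat.succ_ne_zero _)]
  rw [Finset.mul_sum]
  apply Finset.sum_congr rfl
  intro i _
  have : n - 2 - 2*i = n - 2*(i+1) := by omega
  rw [this]
  ring


/-- `h(Δ_e, x) = h(Δ, x) + x·h(link_Δ(e), x)`; consequently, if
`h(Δ, x)` and `h(link_Δ(e), x)` are gamma-positive (with centers `n/2` and
`(n-2)/2`), then so is `h(Δ_e, x)`. -/
theorem edge_subdivision_h_polynomial (N n : ℕ) (Δ : Finset (Finset (Fin N)))
    (e : Finset (Fin N))
    (hdown : ∀ F ∈ Δ, ∀ G ⊆ F, G ∈ Δ)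
    (hdim : ∀ F ∈ Δ, F.card ≤ n)
    (he : e ∈ Δ) (hcard : e.card = 2) (hn : 2 ≤ n) :
    hPoly n (edgeSub Δ e) = hPoly n Δ + Polynomial.X * hPoly (n - 2) (linkC Δ e) ∧
    ((∃ γ : ℕ → ℝ, (∀ i, 0 ≤ γ i) ∧
        hPoly n Δ = ∑ i ∈ Finset.range (n / 2 + 1),
          Polynomial.C (γ i) * Polynomial.X ^ i * (1 + Polynomial.X) ^ (n - 2 * i)) →
      (∃ δ : ℕ → ℝ, (∀ i, 0 ≤ δ i) ∧
        hPoly (n - 2) (linkC Δ e) = ∑ i ∈ Finset.range ((n - 2) / 2 + 1),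
          Polynomial.C (δ i) * Polynomial.X ^ i * (1 + Polynomial.X) ^ (n - 2 - 2 * i)) →
      ∃ γ' : ℕ → ℝ, (∀ i, 0 ≤ γ' i) ∧
        hPoly n (edgeSub Δ e) = ∑ i ∈ Finset.range (n / 2 + 1),
          Polynomial.C (γ' i) * Polynomial.X ^ i * (1 + Polynomial.X) ^ (n - 2 * i)) := by
  obtain ⟨m, rfl⟩ : ∃ m, n = m + 2 := ⟨n - 2, by omega⟩
  have h0 : ((faceCount (edgeSub Δ e) 0 : ℕ) : ℝ) = (faceCount Δ 0 : ℕ) := by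
    exact_mod_cast congrArg (Nat.cast : ℕ → ℝ) (fc_zero he hcard)
  have h1 : ((faceCount (edgeSub Δ e) 1 : ℕ) : ℝ)
      = (faceCount Δ 1 : ℕ) + (faceCount (linkC Δ e) 0 : ℕ) := by
    have := fc_one (Δ := Δ) (e := e) he hcard
    push_cast [this]; ring
  have h2 : ∀ i, ((faceCount (edgeSub Δ e) (i+2) : ℕ) : ℝ)
      = (faceCount Δ (i+2) : ℕ) + (faceCount (linkC Δ e) (i+1) : ℕ)
        + (faceCount (linkC Δ e) i : ℕ) := by
    intro i
    have := fc_two (Δ := Δ) (e := e) hcard i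
    have := congrArg (Nat.cast : ℕ → ℝ) this
    push_cast at this
    linarith
  have hl : ((faceCount (linkC Δ e) (m+1) : ℕ) : ℝ) = 0 := by
    rw [link_top_zero (Δ := Δ) hcard hdim]
    norm_num
  have hm2 : m + 2 - 2 = m := by omega
  have hid : hPoly (m+2) (edgeSub Δ e) = hPoly (m+2) Δ + X * hPoly m (linkC Δ e) := by
    have := key_poly m (fun i => (faceCount Δ i : ℝ))
      (fun i => (faceCount (edgeSub Δ e) i : ℝ))
      (fun i => (faceCount (linkC Δ e) i : ℝ)) h0 h1 h2 hl
    simpa [hPoly, show m+2+1 = m+3 from rfl, hm2] using this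
  constructor
  · rw [hm2]; exact hid
  · rintro ⟨γ, hγ, hΔp⟩ ⟨δ, hδ, hlinkp⟩
    rw [hm2] at hlinkp
    refine ⟨fun i => γ i + if i = 0 then 0 else δ (i-1), fun i => ?_, ?_⟩
    · show 0 ≤ γ i + if i = 0 then 0 else δ (i-1)
      split_ifs with h
      · simpa using hγ i
      · exact add_nonneg (hγ i) (hδ _)
    · rw [hid, hΔp, hlinkp]
      have gp := gamma_part (m+2) hn γ δ
      rw [hm2] at gp
      exact gp
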